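/- Let X be a real Hilbert space, C₁,…,C_m nonempty closed convex sets with C := ⋂Cᵢ ≠ ∅ satisfying bounded regularity, φ : X → ℝ convex continuous with C_min := argmin_C φ nonempty, C* ⊆ C_min nonempty, and suppose the local Lipschitz condition |φ(x)-φ(y)| ≤ L̄‖x-y‖ for x ∈ C*, y ∈ B(x, r₀) with r₀ ∈ (0,1], L̄ ≥ 1. Let {y^k} be generated by the superiorized DSAP algorithm: y^{k,0} = y^k, y^{k,n+1} = y^{k,n} - β_{k,n} s^{k,n}/‖s^{k,n}‖ (with s^{k,n} ∈ ∂φ(y^{k,n}), step 0 if 0 ∈ ∂φ), y^{k+1} = P_{Ω_k,w_k}(y^{k,N_k}), with (Ω_k,w_k) ∈ M*, ∑_k ∑_{n=0}^{N_k-1} β_{k,n} < ∞, 0 < β_{k,n} ≤ 1. Then {y^k} converges in norm to some y* ∈ C, and either y* ∈ C_min, or there exist k₀ ∈ ℕ and c₀ ∈ (0,1) such that for every x ∈ C* and every k ≥ k₀, ‖y^{k+1} - x‖² ≤ ‖y^k - x‖² - c₀ ∑_{n=1}^{N_k-1} β_{k,n}. -/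

import Mathlib

open scoped RealInnerProductSpace

/-- The subgradient set of `φ` at `x`. -/
def SubgradientSet {X : Type*} [NormedAddCommGroup X] [InnerProductSpace ℝ X]
    (φ : X → ℝ) (x : X) : Set X :=
  {v | ∀ z : X, φ x + ⟪v, z - x⟫ ≤ φ z}

section Helpers
open Metric Filter

variable {X : Type*} [NormedAddCommGroup X] [InnerProductSpace ℝ X]

lemma firm_aux (p u x : X) (h : ⟪x - p, u - p⟫ ≤ 0) :
    ‖p - x‖ ^ 2 + ‖u - p‖ ^ 2 ≤ ‖u - x‖ ^ 2 := by
  have hexp := norm_add_sq_real (u - p) (p - x)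
  rw [show u - p + (p - x) = u - x by abel] at hexp
  have h3 : ⟪u - p, p - x⟫ = -⟪x - p, u - p⟫ := by
    rw [show p - x = -(x - p) by abel, inner_neg_right, real_inner_comm]
  linarith [hexp, h3 ▸ (neg_nonneg.2 h : (0:ℝ) ≤ -⟪x - p, u - p⟫)]

lemma norm_le_of_sq_le_sq' {a b : ℝ} (h : a ^ 2 ≤ b ^ 2) (ha : 0 ≤ a) (hb : 0 ≤ b) : a ≤ b := by
  nlinarith

lemma quasi_fejer_tendsto (a ε : ℕ → ℝ) (ha : ∀ k, 0 ≤ a k) (hε : ∀ k, 0 ≤ ε k)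
    (hs : Summable ε) (h : ∀ k, a (k + 1) ≤ a k + ε k) :
    ∃ A : ℝ, Filter.Tendsto a Filter.atTop (nhds A) := by
  set T : ℕ → ℝ := fun i => ∑' k, ε (k + i) with hT
  have hTsum : ∀ i, Summable fun k => ε (k + i) := fun i => (summable_nat_add_iff i).2 hs
  have hTnn : ∀ i, 0 ≤ T i := fun i => tsum_nonneg fun k => hε _
  have hTrec : ∀ i, T i = ε i + T (i + 1) := by
    intro i
    have h1 : ∑' k, ε (k + i) = ε (0 + i) + ∑' k, ε (k + 1 + i) := Summable.tsum_eq_zero_add (hTsum i)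
    simp only [zero_add] at h1
    show (∑' k, ε (k + i)) = ε i + ∑' k, ε (k + (i + 1))
    rw [h1]
    congr 1
    exact tsum_congr fun k => by ring_nf
  have hbmono : Antitone (fun k => a k + T k) := by
    apply antitone_nat_of_succ_le
    intro k
    have h1 := h k
    have h2 := hTrec k
    show a (k + 1) + T (k + 1) ≤ a k + T k
    linarith
  have hbdd : BddBelow (Set.range (fun k => a k + T k)) := by
    refine ⟨0, ?_⟩
    rintro x ⟨k, rfl⟩
    exact add_nonneg (ha k) (hTnn k)
  have hbtend := tendsto_atTop_ciInf hbmono hbdd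
  have hTtend : Tendsto T atTop (nhds 0) := tendsto_sum_nat_add ε
  have h2 := hbtend.sub hTtend
  rw [sub_zero] at h2
  exact ⟨(⨅ i, a i + T i), h2.congr fun k => by ring⟩

variable {m : ℕ} {C : Fin m → Set X} {P : Fin m → X → X}

lemma fold_norm_le
    (hPchar : ∀ i x, ∀ z ∈ C i, ⟪z - P i x, x - P i x⟫ ≤ 0)
    {x : X} (hx : ∀ i, x ∈ C i) :
    ∀ (t : List (Fin m)) (u : X), ‖t.foldl (fun u i => P i u) u - x‖ ≤ ‖u - x‖ := by
  intro t
  induction t with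
  | nil => intro u; simp
  | cons j t' ih =>
    intro u
    have hfirm := firm_aux (P j u) u x (hPchar j u x (hx j))
    have h1 : ‖P j u - x‖ ≤ ‖u - x‖ :=
      norm_le_of_sq_le_sq' (by nlinarith [sq_nonneg ‖u - P j u‖]) (norm_nonneg _) (norm_nonneg _)
    calc ‖(j :: t').foldl (fun u i => P i u) u - x‖
        = ‖t'.foldl (fun u i => P i u) (P j u) - x‖ := by rw [List.foldl_cons]
      _ ≤ ‖P j u - x‖ := ih (P j u)
      _ ≤ ‖u - x‖ := h1

lemma fold_infDist
    (hPmem : ∀ i x, P i x ∈ C i)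
    (hPchar : ∀ i x, ∀ z ∈ C i, ⟪z - P i x, x - P i x⟫ ≤ 0)
    {x : X} (hx : ∀ i, x ∈ C i) :
    ∀ (t : List (Fin m)) (u : X), ∀ i ∈ t,
      Metric.infDist u (C i) ≤
        (t.length : ℝ) * Real.sqrt (‖u - x‖ ^ 2 - ‖t.foldl (fun u i => P i u) u - x‖ ^ 2) := by
  intro t
  induction t with
  | nil => intro u i hi; simp at hi
  | cons j t' ih =>
    intro u i hi
    set u' := P j u with hu'
    have hfold : (j :: t').foldl (fun u i => P i u) u = t'.foldl (fun u i => P i u) u' := by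
      rw [List.foldl_cons]
    set D := ‖u - x‖ ^ 2 - ‖(j :: t').foldl (fun u i => P i u) u - x‖ ^ 2 with hD
    have hfirm := firm_aux u' u x (hPchar j u x (hx j))
    have hle1 : ‖t'.foldl (fun u i => P i u) u' - x‖ ≤ ‖u' - x‖ := fold_norm_le hPchar hx t' u'
    have hle1sq : ‖t'.foldl (fun u i => P i u) u' - x‖ ^ 2 ≤ ‖u' - x‖ ^ 2 :=
      pow_le_pow_left₀ (norm_nonneg _) hle1 2
    have hstep : ‖u - u'‖ ^ 2 ≤ D := by rw [hD, hfold]; nlinarith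
    have hD' : ‖u' - x‖ ^ 2 - ‖t'.foldl (fun u i => P i u) u' - x‖ ^ 2 ≤ D := by
      rw [hD, hfold]; nlinarith
    have hsq : ‖u - u'‖ ≤ Real.sqrt D := by
      rw [show ‖u - u'‖ = Real.sqrt (‖u - u'‖ ^ 2) from (Real.sqrt_sq (norm_nonneg _)).symm]
      exact Real.sqrt_le_sqrt hstep
    have hsqnn : (0:ℝ) ≤ Real.sqrt D := Real.sqrt_nonneg D
    rcases List.mem_cons.1 hi with rfl | hi'
    · have h2 : Metric.infDist u (C i) ≤ dist u u' := Metric.infDist_le_dist_of_mem (hPmem i u)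
      rw [dist_eq_norm] at h2
      have hlen : (1:ℝ) ≤ ((i :: t').length : ℝ) := by
        simp only [List.length_cons]; exact_mod_cast Nat.succ_le_succ (Nat.zero_le _)
      calc Metric.infDist u (C i) ≤ ‖u - u'‖ := h2
        _ ≤ Real.sqrt D := hsq
        _ ≤ ((i :: t').length : ℝ) * Real.sqrt D := by nlinarith
    · have hlip : Metric.infDist u (C i) ≤ Metric.infDist u' (C i) + dist u u' :=
        Metric.infDist_le_infDist_add_dist
      have hih := ih u' i hi'
      have hmono : Real.sqrt (‖u' - x‖ ^ 2 - ‖t'.foldl (fun u i => P i u) u' - x‖ ^ 2)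
          ≤ Real.sqrt D := Real.sqrt_le_sqrt hD'
      have hlen' : (0:ℝ) ≤ (t'.length : ℝ) := by positivity
      calc Metric.infDist u (C i) ≤ Metric.infDist u' (C i) + dist u u' := hlip
        _ ≤ (t'.length : ℝ) *
              Real.sqrt (‖u' - x‖ ^ 2 - ‖t'.foldl (fun u i => P i u) u' - x‖ ^ 2) + ‖u - u'‖ := by
            rw [dist_eq_norm]; exact add_le_add hih le_rfl
        _ ≤ (t'.length : ℝ) * Real.sqrt D + Real.sqrt D :=
            add_le_add (mul_le_mul_of_nonneg_left hmono hlen') hsq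
        _ = ((t'.length : ℝ) + 1) * Real.sqrt D := by ring
        _ = ((j :: t').length : ℝ) * Real.sqrt D := by
            simp only [List.length_cons]; push_cast; ring

end Helpers

open Metric Filter Finset in
set_option maxHeartbeats 1000000 in
theorem stmt12 {X : Type*} [NormedAddCommGroup X] [InnerProductSpace ℝ X] [CompleteSpace X]
    (m : ℕ) (hm : 1 ≤ m) (C : Fin m → Set X)
    (hne : ∀ i, (C i).Nonempty) (hcl : ∀ i, IsClosed (C i)) (hcv : ∀ i, Convex ℝ (C i))
    (hC : (⋂ i, C i).Nonempty)
    -- bounded regularity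
    (hreg : ∀ ε > (0 : ℝ), ∀ M > (0 : ℝ), ∃ δ > (0 : ℝ),
      ∀ x : X, ‖x‖ ≤ M → (∀ i, Metric.infDist x (C i) ≤ δ) →
        Metric.infDist x (⋂ i, C i) ≤ ε)
    -- metric projections onto the individual sets
    (P : Fin m → X → X)
    (hPmem : ∀ i x, P i x ∈ C i)
    (hPchar : ∀ i x, ∀ z ∈ C i, ⟪z - P i x, x - P i x⟫ ≤ 0)
    -- objective function, its minimizers over C, and the subset C*
    (φ : X → ℝ) (hconv : ConvexOn ℝ Set.univ φ) (hcont : Continuous φ)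
    (hCmin : {x ∈ ⋂ i, C i | ∀ y ∈ ⋂ i, C i, φ x ≤ φ y}.Nonempty)
    (Cstar : Set X) (hCs : Cstar.Nonempty)
    (hCsub : Cstar ⊆ {x ∈ ⋂ i, C i | ∀ y ∈ ⋂ i, C i, φ x ≤ φ y})
    (r₀ L : ℝ) (hr₀ : r₀ ∈ Set.Ioc (0 : ℝ) 1) (hL : 1 ≤ L)
    (hLip : ∀ x ∈ Cstar, ∀ y ∈ Metric.closedBall x r₀, |φ x - φ y| ≤ L * ‖x - y‖)
    -- the class M* of amalgamators: fit sets, bounded string lengths, weights ≥ Δpar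
    (Δpar : ℝ) (hΔpar : 0 < Δpar ∧ Δpar < 1 / m) (qbar : ℕ) (hqbar : m ≤ qbar)
    (Ωs : ℕ → Finset (List (Fin m))) (ws : ℕ → List (Fin m) → ℝ)
    (hfit : ∀ k, ∀ i : Fin m, ∃ t ∈ Ωs k, i ∈ t)
    (hlen : ∀ k, ∀ t ∈ Ωs k, t.length ≤ qbar)
    (hwge : ∀ k, ∀ t ∈ Ωs k, Δpar ≤ ws k t)
    (hw1 : ∀ k, ∑ t ∈ Ωs k, ws k t = 1)
    -- the superiorized DSAP algorithm
    (N : ℕ) (Nk : ℕ → ℕ) (hNk : ∀ k, 1 ≤ Nk k ∧ Nk k ≤ N)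
    (β : ℕ → ℕ → ℝ) (hβ : ∀ k n, n < Nk k → 0 < β k n ∧ β k n ≤ 1)
    (hβsum : Summable (fun k => ∑ n ∈ Finset.range (Nk k), β k n))
    (y : ℕ → X) (yin : ℕ → ℕ → X) (v : ℕ → ℕ → X)
    (hinit : ∀ k, yin k 0 = y k)
    (hdir : ∀ k n, n < Nk k →
      (((0 : X) ∉ SubgradientSet φ (yin k n) ∧
          ∃ s ∈ SubgradientSet φ (yin k n), v k n = -(‖s‖⁻¹ • s)) ∨
        ((0 : X) ∈ SubgradientSet φ (yin k n) ∧ v k n = 0)))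
    (hstep : ∀ k n, n < Nk k → yin k (n + 1) = yin k n + β k n • v k n)
    (hout : ∀ k, y (k + 1) =
      ∑ t ∈ Ωs k, ws k t • t.foldl (fun u i => P i u) (yin k (Nk k))) :
    ∃ ystar ∈ ⋂ i, C i,
      Filter.Tendsto y Filter.atTop (nhds ystar) ∧
        (ystar ∈ {x ∈ ⋂ i, C i | ∀ z ∈ ⋂ i, C i, φ x ≤ φ z} ∨
          ∃ k₀ : ℕ, ∃ c₀ ∈ Set.Ioo (0 : ℝ) 1, ∀ x ∈ Cstar, ∀ k ≥ k₀,
            ‖y (k + 1) - x‖ ^ 2 ≤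
              ‖y k - x‖ ^ 2 - c₀ * ∑ n ∈ Finset.Ico 1 (Nk k), β k n) := by
  classical
  obtain ⟨x0, hx0⟩ := hC
  have hx0i : ∀ i, x0 ∈ C i := fun i => Set.mem_iInter.1 hx0 i
  set ε : ℕ → ℝ := fun k => ∑ n ∈ Finset.range (Nk k), β k n with hεdef
  have hβnn : ∀ k n, n < Nk k → 0 ≤ β k n := fun k n h => (hβ k n h).1.le
  have hεnn : ∀ k, 0 ≤ ε k := fun k =>
    Finset.sum_nonneg fun n hn => hβnn k n (Finset.mem_range.1 hn)
  have hεsum : Summable ε := hβsum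
  have hεto : Tendsto ε atTop (nhds 0) := hεsum.tendsto_atTop_zero
  have hβleε : ∀ k n, n < Nk k → β k n ≤ ε k := fun k n hn =>
    Finset.single_le_sum (f := β k) (fun j hj => hβnn k j (Finset.mem_range.1 hj))
      (Finset.mem_range.2 hn)
  have hvle : ∀ k n, n < Nk k → ‖v k n‖ ≤ 1 := by
    intro k n hn
    rcases hdir k n hn with ⟨_, s, _, hv⟩ | ⟨_, hv⟩
    · rw [hv, norm_neg, norm_smul, norm_inv, norm_norm]
      rcases eq_or_ne s 0 with rfl | h
      · simp
      · rw [inv_mul_cancel₀ (norm_ne_zero_iff.2 h)]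
    · rw [hv, norm_zero]; exact zero_le_one
  -- inner iterates stay close to y k
  have hyin : ∀ k n, n ≤ Nk k → ‖yin k n - y k‖ ≤ ∑ j ∈ Finset.range n, β k j := by
    intro k n
    induction n with
    | zero => intro _; simp [hinit k]
    | succ n ih =>
      intro hn
      have hn' : n < Nk k := hn
      have h1 := ih (le_of_lt hn')
      rw [hstep k n hn', Finset.sum_range_succ]
      have h2 : β k n * ‖v k n‖ ≤ β k n :=
        (mul_le_mul_of_nonneg_left (hvle k n hn') (hβnn k n hn')).trans_eq (mul_one _)
      calc ‖yin k n + β k n • v k n - y k‖ ≤ ‖yin k n - y k‖ + ‖β k n • v k n‖ := by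
            rw [show yin k n + β k n • v k n - y k = (yin k n - y k) + β k n • v k n by abel]
            exact norm_add_le _ _
        _ ≤ (∑ j ∈ Finset.range n, β k j) + β k n := by
            refine add_le_add h1 ?_
            rw [norm_smul, Real.norm_eq_abs, abs_of_nonneg (hβnn k n hn')]
            exact h2
  have hyinε : ∀ k n, n ≤ Nk k → ‖yin k n - y k‖ ≤ ε k := by
    intro k n hn
    refine (hyin k n hn).trans ?_
    exact Finset.sum_le_sum_of_subset_of_nonneg (Finset.range_subset_range.2 hn)
      (fun j hj _ => hβnn k j (Finset.mem_range.1 hj))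
  have hwpos : ∀ k, ∀ t ∈ Ωs k, 0 ≤ ws k t := fun k t ht => hΔpar.1.le.trans (hwge k t ht)
  -- output representation
  have hrep : ∀ k (x : X), y (k + 1) - x =
      ∑ t ∈ Ωs k, ws k t • (t.foldl (fun u i => P i u) (yin k (Nk k)) - x) := by
    intro k x
    rw [hout k]
    have h1 : ∑ t ∈ Ωs k, ws k t • (t.foldl (fun u i => P i u) (yin k (Nk k)) - x)
        = (∑ t ∈ Ωs k, ws k t • t.foldl (fun u i => P i u) (yin k (Nk k))) - x := by
      simp only [smul_sub]
      rw [Finset.sum_sub_distrib, ← Finset.sum_smul, hw1 k, one_smul]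
    rw [h1]
  have hsum_norm : ∀ k (x : X), ‖y (k + 1) - x‖ ≤
      ∑ t ∈ Ωs k, ws k t * ‖t.foldl (fun u i => P i u) (yin k (Nk k)) - x‖ := by
    intro k x
    rw [hrep k x]
    refine (norm_sum_le _ _).trans ?_
    refine Finset.sum_le_sum fun t ht => ?_
    rw [norm_smul, Real.norm_eq_abs, abs_of_nonneg (hwpos k t ht)]
  have hout_le : ∀ (x : X), (∀ i, x ∈ C i) → ∀ k,
      ‖y (k + 1) - x‖ ≤ ‖yin k (Nk k) - x‖ := by
    intro x hx k
    refine (hsum_norm k x).trans ?_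
    calc ∑ t ∈ Ωs k, ws k t * ‖t.foldl (fun u i => P i u) (yin k (Nk k)) - x‖
        ≤ ∑ t ∈ Ωs k, ws k t * ‖yin k (Nk k) - x‖ :=
          Finset.sum_le_sum fun t ht =>
            mul_le_mul_of_nonneg_left (fold_norm_le hPchar hx t _) (hwpos k t ht)
      _ = ‖yin k (Nk k) - x‖ := by rw [← Finset.sum_mul, hw1 k, one_mul]
  have hJen : ∀ (x : X) k, ‖y (k + 1) - x‖ ^ 2 ≤
      ∑ t ∈ Ωs k, ws k t * ‖t.foldl (fun u i => P i u) (yin k (Nk k)) - x‖ ^ 2 := by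
    intro x k
    have h2 := Real.pow_arith_mean_le_arith_mean_pow (Ωs k) (ws k)
      (fun t => ‖t.foldl (fun u i => P i u) (yin k (Nk k)) - x‖) (hwpos k) (hw1 k)
      (fun t _ => norm_nonneg _) 2
    exact le_trans (pow_le_pow_left₀ (norm_nonneg _) (hsum_norm k x) 2) h2
  -- key drop inequality for each constraint set
  have hF2 : ∀ (x : X), (∀ i, x ∈ C i) → ∀ k (i : Fin m),
      Metric.infDist (yin k (Nk k)) (C i) ^ 2 ≤
        (qbar : ℝ) ^ 2 / Δpar * (‖yin k (Nk k) - x‖ ^ 2 - ‖y (k + 1) - x‖ ^ 2) := by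
    intro x hx k i
    obtain ⟨t0, ht0, hit0⟩ := hfit k i
    set u := yin k (Nk k) with hu
    have hDnn : ∀ t ∈ Ωs k, 0 ≤ ‖u - x‖ ^ 2 - ‖t.foldl (fun u i => P i u) u - x‖ ^ 2 :=
      fun t _ => sub_nonneg.2 (pow_le_pow_left₀ (norm_nonneg _) (fold_norm_le hPchar hx t u) 2)
    have hsum : ∑ t ∈ Ωs k, ws k t * (‖u - x‖ ^ 2 - ‖t.foldl (fun u i => P i u) u - x‖ ^ 2)
        = ‖u - x‖ ^ 2 - ∑ t ∈ Ωs k, ws k t * ‖t.foldl (fun u i => P i u) u - x‖ ^ 2 := by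
      simp only [mul_sub]
      rw [Finset.sum_sub_distrib, ← Finset.sum_mul, hw1 k, one_mul]
    have hkey : Δpar * (‖u - x‖ ^ 2 - ‖t0.foldl (fun u i => P i u) u - x‖ ^ 2)
        ≤ ‖u - x‖ ^ 2 - ‖y (k + 1) - x‖ ^ 2 := by
      have h1 : Δpar * (‖u - x‖ ^ 2 - ‖t0.foldl (fun u i => P i u) u - x‖ ^ 2)
          ≤ ws k t0 * (‖u - x‖ ^ 2 - ‖t0.foldl (fun u i => P i u) u - x‖ ^ 2) :=
        mul_le_mul_of_nonneg_right (hwge k t0 ht0) (hDnn t0 ht0)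
      have h2 : ws k t0 * (‖u - x‖ ^ 2 - ‖t0.foldl (fun u i => P i u) u - x‖ ^ 2)
          ≤ ∑ t ∈ Ωs k, ws k t * (‖u - x‖ ^ 2 - ‖t.foldl (fun u i => P i u) u - x‖ ^ 2) :=
        Finset.single_le_sum (fun t ht => mul_nonneg (hwpos k t ht) (hDnn t ht)) ht0
      have h3 := hJen x k
      rw [hsum] at h2
      linarith
    have hd := fold_infDist hPmem hPchar hx t0 u i hit0
    have hdsq : Metric.infDist u (C i) ^ 2 ≤
        (t0.length : ℝ) ^ 2 * (‖u - x‖ ^ 2 - ‖t0.foldl (fun u i => P i u) u - x‖ ^ 2) := by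
      have h4 : ((t0.length : ℝ) * Real.sqrt
            (‖u - x‖ ^ 2 - ‖t0.foldl (fun u i => P i u) u - x‖ ^ 2)) ^ 2
          = (t0.length : ℝ) ^ 2 * (‖u - x‖ ^ 2 - ‖t0.foldl (fun u i => P i u) u - x‖ ^ 2) := by
        rw [mul_pow, Real.sq_sqrt (hDnn t0 ht0)]
      calc Metric.infDist u (C i) ^ 2
          ≤ ((t0.length : ℝ) * Real.sqrt
              (‖u - x‖ ^ 2 - ‖t0.foldl (fun u i => P i u) u - x‖ ^ 2)) ^ 2 :=
            pow_le_pow_left₀ Metric.infDist_nonneg hd 2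
        _ = _ := h4
    have hlent : (t0.length : ℝ) ≤ (qbar : ℝ) := by exact_mod_cast hlen k t0 ht0
    have hlennn : (0:ℝ) ≤ (t0.length : ℝ) := by positivity
    have hq : (t0.length : ℝ) ^ 2 * (‖u - x‖ ^ 2 - ‖t0.foldl (fun u i => P i u) u - x‖ ^ 2)
        ≤ (qbar : ℝ) ^ 2 * (‖u - x‖ ^ 2 - ‖t0.foldl (fun u i => P i u) u - x‖ ^ 2) :=
      mul_le_mul_of_nonneg_right (by nlinarith) (hDnn t0 ht0)
    have hΔ := hΔpar.1
    have hfin : (qbar : ℝ) ^ 2 * (‖u - x‖ ^ 2 - ‖t0.foldl (fun u i => P i u) u - x‖ ^ 2)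
        ≤ (qbar : ℝ) ^ 2 / Δpar * (‖u - x‖ ^ 2 - ‖y (k + 1) - x‖ ^ 2) := by
      rw [div_mul_eq_mul_div, le_div_iff₀ hΔ]
      calc (qbar : ℝ) ^ 2 * (‖u - x‖ ^ 2 - ‖t0.foldl (fun u i => P i u) u - x‖ ^ 2) * Δpar
          = (qbar : ℝ) ^ 2 * (Δpar * (‖u - x‖ ^ 2 - ‖t0.foldl (fun u i => P i u) u - x‖ ^ 2)) := by
            ring
        _ ≤ (qbar : ℝ) ^ 2 * (‖u - x‖ ^ 2 - ‖y (k + 1) - x‖ ^ 2) :=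
            mul_le_mul_of_nonneg_left hkey (by positivity)
    linarith
  -- quasi-Fejér property
  have hquasi : ∀ (z : X), (∀ i, z ∈ C i) → ∀ k, ‖y (k + 1) - z‖ ≤ ‖y k - z‖ + ε k := by
    intro z hz k
    calc ‖y (k + 1) - z‖ ≤ ‖yin k (Nk k) - z‖ := hout_le z hz k
      _ ≤ ‖y k - z‖ + ‖yin k (Nk k) - y k‖ := by
          rw [show yin k (Nk k) - z = (y k - z) + (yin k (Nk k) - y k) by abel]
          exact norm_add_le _ _
      _ ≤ ‖y k - z‖ + ε k := add_le_add le_rfl (hyinε k (Nk k) le_rfl)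
  set a : ℕ → ℝ := fun k => ‖y k - x0‖ with ha
  set b : ℕ → ℝ := fun k => ‖yin k (Nk k) - x0‖ with hb
  obtain ⟨A, hA⟩ := quasi_fejer_tendsto a ε (fun k => norm_nonneg _) hεnn hεsum
    (fun k => hquasi x0 hx0i k)
  have haS : Tendsto (fun k => a (k + 1)) atTop (nhds A) := hA.comp (tendsto_add_atTop_nat 1)
  have hble : ∀ k, b k ≤ a k + ε k := by
    intro k
    calc b k ≤ ‖y k - x0‖ + ‖yin k (Nk k) - y k‖ := by
          show ‖yin k (Nk k) - x0‖ ≤ _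
          rw [show yin k (Nk k) - x0 = (y k - x0) + (yin k (Nk k) - y k) by abel]
          exact norm_add_le _ _
      _ ≤ a k + ε k := add_le_add le_rfl (hyinε k (Nk k) le_rfl)
  have hage : ∀ k, a (k + 1) ≤ b k := fun k => hout_le x0 hx0i k
  have hbtend : Tendsto b atTop (nhds A) := by
    have h1 : Tendsto (fun k => a k + ε k) atTop (nhds (A + 0)) := hA.add hεto
    rw [add_zero] at h1
    exact tendsto_of_tendsto_of_tendsto_of_le_of_le haS h1 hage hble
  have hdiff : Tendsto (fun k => b k ^ 2 - a (k + 1) ^ 2) atTop (nhds 0) := by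
    have h1 := (hbtend.pow 2).sub (haS.pow 2)
    simpa using h1
  -- distances to each C i tend to zero
  have hCdist : ∀ i : Fin m, Tendsto (fun k => Metric.infDist (y k) (C i)) atTop (nhds 0) := by
    intro i
    have hub : ∀ k, Metric.infDist (y k) (C i) ≤
        Real.sqrt ((qbar : ℝ) ^ 2 / Δpar * (b k ^ 2 - a (k + 1) ^ 2)) + ε k := by
      intro k
      have h1 : Metric.infDist (y k) (C i) ≤
          Metric.infDist (yin k (Nk k)) (C i) + dist (y k) (yin k (Nk k)) :=
        Metric.infDist_le_infDist_add_dist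
      have h2 : Metric.infDist (yin k (Nk k)) (C i) ≤
          Real.sqrt ((qbar : ℝ) ^ 2 / Δpar * (b k ^ 2 - a (k + 1) ^ 2)) := by
        rw [show Metric.infDist (yin k (Nk k)) (C i)
            = Real.sqrt (Metric.infDist (yin k (Nk k)) (C i) ^ 2) from
          (Real.sqrt_sq Metric.infDist_nonneg).symm]
        exact Real.sqrt_le_sqrt (hF2 x0 hx0i k i)
      have h3 : dist (y k) (yin k (Nk k)) ≤ ε k := by
        rw [dist_comm, dist_eq_norm]; exact hyinε k _ le_rfl
      linarith
    have hlim : Tendsto (fun k =>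
        Real.sqrt ((qbar : ℝ) ^ 2 / Δpar * (b k ^ 2 - a (k + 1) ^ 2)) + ε k) atTop (nhds 0) := by
      have h4 : Tendsto (fun k => (qbar : ℝ) ^ 2 / Δpar * (b k ^ 2 - a (k + 1) ^ 2))
          atTop (nhds 0) := by
        have := hdiff.const_mul ((qbar : ℝ) ^ 2 / Δpar)
        simpa using this
      have h5 : Tendsto (fun k =>
          Real.sqrt ((qbar : ℝ) ^ 2 / Δpar * (b k ^ 2 - a (k + 1) ^ 2))) atTop (nhds 0) := by
        have := (Real.continuous_sqrt.tendsto 0).comp h4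
        simpa [Function.comp_def] using this
      have := h5.add hεto
      simpa using this
    exact squeeze_zero (fun k => Metric.infDist_nonneg) hub hlim
  -- iterated quasi-Fejér bound
  have hiter : ∀ (z : X), (∀ i, z ∈ C i) → ∀ k l,
      ‖y (k + l) - z‖ ≤ ‖y k - z‖ + ∑ j ∈ Finset.range l, ε (k + j) := by
    intro z hz k l
    induction l with
    | zero => simp
    | succ l ih =>
      rw [Finset.sum_range_succ, show k + (l + 1) = (k + l) + 1 from rfl]
      calc ‖y ((k + l) + 1) - z‖ ≤ ‖y (k + l) - z‖ + ε (k + l) := hquasi z hz (k + l)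
        _ ≤ ‖y k - z‖ + ∑ j ∈ Finset.range l, ε (k + j) + ε (k + l) := by linarith
        _ = ‖y k - z‖ + (∑ j ∈ Finset.range l, ε (k + j) + ε (k + l)) := by ring
  have hTail : ∀ k l, ∑ j ∈ Finset.range l, ε (k + j) ≤ ∑' j, ε (j + k) := by
    intro k l
    have hsm : Summable (fun j => ε (j + k)) := (summable_nat_add_iff k).2 hεsum
    calc ∑ j ∈ Finset.range l, ε (k + j) = ∑ j ∈ Finset.range l, ε (j + k) :=
        Finset.sum_congr rfl fun j _ => by rw [add_comm]
      _ ≤ ∑' j, ε (j + k) := Summable.sum_le_tsum (Finset.range l) (fun j _ => hεnn _) hsm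
  set M : ℝ := ‖x0‖ + (a 0 + ∑' j, ε (j + 0)) + 1 with hM
  have hMnn : 0 < M := by
    have h1 : 0 ≤ ∑' j, ε (j + 0) := tsum_nonneg fun j => hεnn _
    have h2 : 0 ≤ a 0 := norm_nonneg _
    have h3 : 0 ≤ ‖x0‖ := norm_nonneg _
    rw [hM]; linarith
  have hbound : ∀ k, ‖y k‖ ≤ M := by
    intro k
    have h1 : a k ≤ a 0 + ∑' j, ε (j + 0) := by
      have h2 := hiter x0 hx0i 0 k
      have h3 := hTail 0 k
      simp only [zero_add] at h2 h3
      calc a k = ‖y k - x0‖ := rfl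
        _ ≤ ‖y 0 - x0‖ + ∑ j ∈ Finset.range k, ε j := h2
        _ ≤ a 0 + ∑' j, ε (j + 0) := by
            refine add_le_add le_rfl ?_
            calc ∑ j ∈ Finset.range k, ε j = ∑ j ∈ Finset.range k, ε (0 + j) := by
                  exact Finset.sum_congr rfl fun j _ => by rw [zero_add]
              _ ≤ ∑' j, ε (j + 0) := hTail 0 k
    calc ‖y k‖ = ‖(y k - x0) + x0‖ := by rw [sub_add_cancel]
      _ ≤ a k + ‖x0‖ := norm_add_le _ _
      _ ≤ M := by rw [hM]; linarith
  have hCcl : IsClosed (⋂ i, C i) := isClosed_iInter fun i => hcl i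
  have hCne : (⋂ i, C i).Nonempty := ⟨x0, hx0⟩
  -- distance to the intersection tends to zero
  have hdC : Tendsto (fun k => Metric.infDist (y k) (⋂ i, C i)) atTop (nhds 0) := by
    rw [Metric.tendsto_atTop]
    intro e he
    obtain ⟨δ, hδ, hδ2⟩ := hreg (e / 2) (by linarith) M hMnn
    have hev : ∀ᶠ k in atTop, ∀ i, Metric.infDist (y k) (C i) ≤ δ := by
      rw [Filter.eventually_all]
      intro i
      exact ((hCdist i).eventually (gt_mem_nhds hδ)).mono fun k hk => hk.le
    obtain ⟨K, hK⟩ := eventually_atTop.1 hev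
    refine ⟨K, fun n hn => ?_⟩
    have h1 := hδ2 (y n) (hbound n) (hK n hn)
    rw [Real.dist_eq, sub_zero, abs_of_nonneg Metric.infDist_nonneg]
    linarith
  have hTt : Tendsto (fun i => ∑' k, ε (k + i)) atTop (nhds 0) := tendsto_sum_nat_add ε
  -- the sequence is Cauchy
  have hcauchy : CauchySeq y := by
    rw [Metric.cauchySeq_iff']
    intro e he
    have h1 := (hdC.eventually (gt_mem_nhds (show (0:ℝ) < e / 4 by linarith))).and
      (hTt.eventually (gt_mem_nhds (show (0:ℝ) < e / 4 by linarith)))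
    obtain ⟨K, hK⟩ := eventually_atTop.1 h1
    obtain ⟨hK1, hK2⟩ := hK K le_rfl
    obtain ⟨z, hzC, hzd⟩ := (Metric.infDist_lt_iff hCne).1 hK1
    have hzi : ∀ i, z ∈ C i := fun i => Set.mem_iInter.1 hzC i
    refine ⟨K, fun n hn => ?_⟩
    have h2 : ‖y n - z‖ ≤ ‖y K - z‖ + ∑ j ∈ Finset.range (n - K), ε (K + j) := by
      have h3 := hiter z hzi K (n - K)
      rwa [Nat.add_sub_cancel' hn] at h3
    have h3 : ∑ j ∈ Finset.range (n - K), ε (K + j) ≤ ∑' j, ε (j + K) := hTail K (n - K)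
    have h4 : ‖y K - z‖ < e / 4 := by rw [← dist_eq_norm]; exact hzd
    rw [dist_eq_norm]
    calc ‖y n - y K‖ ≤ ‖y n - z‖ + ‖y K - z‖ := by
          rw [show y n - y K = (y n - z) + (z - y K) by abel]
          refine (norm_add_le _ _).trans ?_
          rw [norm_sub_rev z (y K)]
      _ < e := by linarith
  obtain ⟨ystar, hyst⟩ := cauchySeq_tendsto_of_complete hcauchy
  have hystarC : ystar ∈ ⋂ i, C i := by
    have hcont' : Tendsto (fun k => Metric.infDist (y k) (⋂ i, C i)) atTop
        (nhds (Metric.infDist ystar (⋂ i, C i))) :=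
      ((Metric.continuous_infDist_pt (⋂ i, C i)).tendsto ystar).comp hyst
    have h0 : Metric.infDist ystar (⋂ i, C i) = 0 := tendsto_nhds_unique hcont' hdC
    exact (hCcl.mem_iff_infDist_zero hCne).2 h0
  refine ⟨ystar, hystarC, hyst, ?_⟩
  by_cases hmin : ∀ z ∈ ⋂ i, C i, φ ystar ≤ φ z
  · exact Or.inl ⟨hystarC, hmin⟩
  · right
    push_neg at hmin
    obtain ⟨z1, hz1C, hz1⟩ := hmin
    obtain ⟨xs, hxs⟩ := hCs
    obtain ⟨hxsC, hxsmin⟩ := hCsub hxs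
    set gap : ℝ := φ ystar - φ xs with hgapdef
    have hgap : 0 < gap := by
      have := hxsmin z1 hz1C
      rw [hgapdef]; linarith
    -- all points of Cstar have value φ xs
    have hvalC : ∀ x ∈ Cstar, φ x = φ xs := by
      intro x hx
      obtain ⟨hxC, hxmin⟩ := hCsub hx
      exact le_antisymm (hxmin xs hxsC) (hxsmin x hxC)
    -- continuity of φ at ystar
    have hco : ∃ ρ : ℝ, 0 < ρ ∧ ρ ≤ 1 / 2 ∧
        ∀ z : X, ‖z - ystar‖ ≤ ρ → |φ z - φ ystar| ≤ gap / 4 := by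
      have h1 : ContinuousAt φ ystar := hcont.continuousAt
      rw [Metric.continuousAt_iff] at h1
      obtain ⟨δ, hδ, h2⟩ := h1 (gap / 4) (by linarith)
      refine ⟨min (δ / 2) (1 / 2), by positivity, min_le_right _ _, ?_⟩
      intro z hz
      have h3 : dist z ystar < δ := by
        rw [dist_eq_norm]
        calc ‖z - ystar‖ ≤ min (δ / 2) (1 / 2) := hz
          _ ≤ δ / 2 := min_le_left _ _
          _ < δ := by linarith
      have h4 := h2 h3
      rw [Real.dist_eq] at h4
      exact h4.le
    obtain ⟨ρ, hρ, hρ2, hρball⟩ := hco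
    -- lower bound on φ near ystar
    have hφlow : ∀ u : X, ‖u - ystar‖ ≤ ρ → φ xs + 3 / 4 * gap ≤ φ u := by
      intro u hu
      have h1 := hρball u hu
      have h2 := abs_le.1 h1
      rw [hgapdef] at h2 ⊢
      linarith [h2.1]
    -- upper bound on subgradients near ystar
    have hsub : ∀ u : X, ‖u - ystar‖ ≤ ρ / 2 → ∀ s ∈ SubgradientSet φ u, s ≠ 0 →
        ‖s‖ ≤ gap / ρ := by
      intro u hu s hs hs0
      set z : X := u + (ρ / 2) • (‖s‖⁻¹ • s) with hz
      have hsn : (0:ℝ) < ‖s‖ := norm_pos_iff.2 hs0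
      have hz1 : ‖z - ystar‖ ≤ ρ := by
        have h1 : ‖(ρ / 2) • (‖s‖⁻¹ • s)‖ = ρ / 2 := by
          rw [norm_smul, norm_smul, norm_inv, norm_norm, Real.norm_eq_abs,
            abs_of_nonneg (by linarith : (0:ℝ) ≤ ρ / 2), inv_mul_cancel₀ (ne_of_gt hsn), mul_one]
        calc ‖z - ystar‖ = ‖(u - ystar) + (ρ / 2) • (‖s‖⁻¹ • s)‖ := by
              rw [hz, show u + (ρ / 2) • (‖s‖⁻¹ • s) - ystar
                = (u - ystar) + (ρ / 2) • (‖s‖⁻¹ • s) by abel]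
          _ ≤ ‖u - ystar‖ + ‖(ρ / 2) • (‖s‖⁻¹ • s)‖ := norm_add_le _ _
          _ ≤ ρ / 2 + ρ / 2 := by rw [h1]; exact add_le_add hu le_rfl
          _ = ρ := by ring
      have h2 : ⟪s, z - u⟫ = (ρ / 2) * ‖s‖ := by
        rw [hz, show u + (ρ / 2) • (‖s‖⁻¹ • s) - u = (ρ / 2) • (‖s‖⁻¹ • s) by abel]
        rw [real_inner_smul_right, real_inner_smul_right, real_inner_self_eq_norm_sq]
        field_simp
      have h3 := hs z
      rw [h2] at h3
      have h4 := hρball z hz1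
      have h5 := abs_le.1 h4
      have h6 : φ ystar - gap / 4 ≤ φ u := by
        have := hρball u (le_trans hu (by linarith))
        have h7 := abs_le.1 this
        linarith [h7.1]
      have h8 : (ρ / 2) * ‖s‖ ≤ gap / 2 := by linarith [h5.2]
      rw [le_div_iff₀ hρ]
      nlinarith
    -- choose k₀
    have hev1 : ∀ᶠ k in atTop, ‖y k - ystar‖ < ρ / 4 := by
      have h1 : Tendsto (fun k => ‖y k - ystar‖) atTop (nhds 0) := by
        have h0 : Tendsto (fun k => y k - ystar) atTop (nhds (ystar - ystar)) :=
          hyst.sub tendsto_const_nhds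
        rw [sub_self] at h0
        have h0n := h0.norm
        rwa [norm_zero] at h0n
      exact h1.eventually (gt_mem_nhds (by positivity))
    have hev2 : ∀ᶠ k in atTop, ε k < ρ / 4 := hεto.eventually (gt_mem_nhds (by positivity))
    obtain ⟨k₀, hk₀⟩ := eventually_atTop.1 (hev1.and hev2)
    refine ⟨k₀, ρ / 2, ⟨by positivity, by linarith⟩, ?_⟩
    intro x hx k hk
    obtain ⟨hk1, hk2⟩ := hk₀ k hk
    obtain ⟨hxC, _⟩ := hCsub hx
    have hxCi : ∀ i, x ∈ C i := fun i => Set.mem_iInter.1 hxC i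
    have hφx : φ x = φ xs := hvalC x hx
    -- all inner iterates in ball ystar (ρ/2)
    have hin : ∀ n, n ≤ Nk k → ‖yin k n - ystar‖ ≤ ρ / 2 := by
      intro n hn
      calc ‖yin k n - ystar‖ = ‖(yin k n - y k) + (y k - ystar)‖ := by
            rw [show yin k n - ystar = (yin k n - y k) + (y k - ystar) by abel]
        _ ≤ ‖yin k n - y k‖ + ‖y k - ystar‖ := norm_add_le _ _
        _ ≤ ε k + ρ / 4 := add_le_add (hyinε k n hn) hk1.le
        _ ≤ ρ / 2 := by linarith
    -- stepwise decrease
    have hdec : ∀ n, n < Nk k →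
        ‖yin k (n + 1) - x‖ ^ 2 ≤ ‖yin k n - x‖ ^ 2 - ρ * β k n := by
      intro n hn
      have hun : ‖yin k n - ystar‖ ≤ ρ / 2 := hin n hn.le
      have hlow : φ xs + 3 / 4 * gap ≤ φ (yin k n) :=
        hφlow (yin k n) (le_trans hun (by linarith))
      rcases hdir k n hn with ⟨h0, s, hsg, hv⟩ | ⟨h0, _⟩
      · have hs0 : s ≠ 0 := by rintro rfl; exact h0 hsg
        have hsn : (0:ℝ) < ‖s‖ := norm_pos_iff.2 hs0
        have hsle : ‖s‖ ≤ gap / ρ := hsub (yin k n) hun s hsg hs0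
        -- subgradient at yin k n evaluated at x
        have h1 := hsg x
        have h2 : φ (yin k n) - φ x ≤ ⟪s, yin k n - x⟫ := by
          have h3 : ⟪s, x - yin k n⟫ = -⟪s, yin k n - x⟫ := by
            rw [show x - yin k n = -(yin k n - x) by abel, inner_neg_right]
          rw [h3] at h1
          linarith
        have h4 : 3 / 4 * gap ≤ ⟪s, yin k n - x⟫ := by
          rw [hφx] at h2; linarith
        have hinner : ⟪v k n, yin k n - x⟫ ≤ -(3 / 4 * ρ) := by
          rw [hv]
          rw [inner_neg_left, real_inner_smul_left]
          have h5 : (3 / 4 * gap) / ‖s‖ ≤ ‖s‖⁻¹ * ⟪s, yin k n - x⟫ := by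
            rw [div_le_iff₀ hsn]
            calc 3 / 4 * gap ≤ ⟪s, yin k n - x⟫ := h4
              _ = ‖s‖⁻¹ * ⟪s, yin k n - x⟫ * ‖s‖ := by field_simp
          have h6 : 3 / 4 * ρ ≤ (3 / 4 * gap) / ‖s‖ := by
            rw [le_div_iff₀ hsn]
            have h7 : ‖s‖ * ρ ≤ gap := by
              have h7a : ‖s‖ ≤ gap / ρ := hsle
              rw [le_div_iff₀ hρ] at h7a
              linarith
            nlinarith
          linarith
        have hβle : β k n ≤ ρ / 4 := le_trans (hβleε k n hn) hk2.le
        have hvn : ‖v k n‖ = 1 := by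
          rw [hv, norm_neg, norm_smul, norm_inv, norm_norm, inv_mul_cancel₀ (ne_of_gt hsn)]
        have hexp : ‖yin k (n + 1) - x‖ ^ 2
            = ‖yin k n - x‖ ^ 2 + 2 * (β k n * ⟪v k n, yin k n - x⟫) + β k n ^ 2 := by
          rw [hstep k n hn]
          rw [show yin k n + β k n • v k n - x = (yin k n - x) + β k n • v k n by abel]
          rw [norm_add_sq_real, real_inner_smul_right, norm_smul, Real.norm_eq_abs,
            abs_of_nonneg (hβnn k n hn), mul_pow, hvn]
          rw [real_inner_comm]
          ring
        have hβpos := (hβ k n hn).1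
        calc ‖yin k (n + 1) - x‖ ^ 2
            = ‖yin k n - x‖ ^ 2 + 2 * (β k n * ⟪v k n, yin k n - x⟫) + β k n ^ 2 := hexp
          _ ≤ ‖yin k n - x‖ ^ 2 + 2 * (β k n * (-(3 / 4 * ρ))) + β k n * (ρ / 4) := by
              have h8 : β k n * ⟪v k n, yin k n - x⟫ ≤ β k n * (-(3 / 4 * ρ)) :=
                mul_le_mul_of_nonneg_left hinner hβpos.le
              have h9 : β k n ^ 2 ≤ β k n * (ρ / 4) := by
                rw [sq]
                exact mul_le_mul_of_nonneg_left hβle hβpos.le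
              linarith
          _ ≤ ‖yin k n - x‖ ^ 2 - ρ * β k n := by nlinarith
      · -- 0 ∈ ∂φ implies yin k n is a global minimizer, contradiction
        exfalso
        have h1 := h0 xs
        simp only [inner_zero_left, add_zero] at h1
        linarith
    -- telescoping
    have htel : ∀ n, n ≤ Nk k →
        ‖yin k n - x‖ ^ 2 ≤ ‖y k - x‖ ^ 2 - ρ * ∑ j ∈ Finset.range n, β k j := by
      intro n
      induction n with
      | zero => intro _; simp [hinit k]
      | succ n ih =>
        intro hn
        have hn' : n < Nk k := hn
        have h1 := ih hn'.le
        have h2 := hdec n hn'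
        rw [Finset.sum_range_succ]
        calc ‖yin k (n + 1) - x‖ ^ 2 ≤ ‖yin k n - x‖ ^ 2 - ρ * β k n := h2
          _ ≤ ‖y k - x‖ ^ 2 - ρ * ∑ j ∈ Finset.range n, β k j - ρ * β k n := by linarith
          _ = ‖y k - x‖ ^ 2 - ρ * (∑ j ∈ Finset.range n, β k j + β k n) := by ring
    have hfinal1 : ‖y (k + 1) - x‖ ^ 2 ≤ ‖yin k (Nk k) - x‖ ^ 2 :=
      pow_le_pow_left₀ (norm_nonneg _) (hout_le x hxCi k) 2
    have hfinal2 := htel (Nk k) le_rfl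
    have hIco : ∑ n ∈ Finset.Ico 1 (Nk k), β k n ≤ ∑ n ∈ Finset.range (Nk k), β k n := by
      rw [Finset.range_eq_Ico]
      exact Finset.sum_le_sum_of_subset_of_nonneg
        (Finset.Ico_subset_Ico (Nat.zero_le 1) le_rfl)
        (fun n hn _ => hβnn k n (Finset.mem_Ico.1 hn).2)
    have hIconn : 0 ≤ ∑ n ∈ Finset.Ico 1 (Nk k), β k n :=
      Finset.sum_nonneg fun n hn => hβnn k n (Finset.mem_Ico.1 hn).2
    have h10 : ρ / 2 * ∑ n ∈ Finset.Ico 1 (Nk k), β k n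
        ≤ ρ * ∑ n ∈ Finset.range (Nk k), β k n := by
      calc ρ / 2 * ∑ n ∈ Finset.Ico 1 (Nk k), β k n
          ≤ ρ / 2 * ∑ n ∈ Finset.range (Nk k), β k n := by
            exact mul_le_mul_of_nonneg_left hIco (by positivity)
        _ ≤ ρ * ∑ n ∈ Finset.range (Nk k), β k n := by
            have hnn : 0 ≤ ∑ n ∈ Finset.range (Nk k), β k n := hεnn k
            nlinarith
    linarith
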